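/- Let x_a < x_{a+1} < ... < x_{b+p+1} be distinct points with a ≤ b, and for each integer r with a ≤ r ≤ b+1 let f^{(r)} denote the derivative of the polynomial of degree ≤ p interpolating V at x_r, ..., x_{r+p}. Suppose x* is a common point of all these stencils (i.e., x* = x_k for some b+1 ≤ k ≤ a+p). Then f^{(b+1)}(x*) − f^{(a)}(x*) = Σ_{r=a}^{b} V[x_r,...,x_{r+p+1}] · (x_{r+p+1} − x_r) · Π_{m : x_{r+m} ≠ x*} (x* − x_{r+m}), where the product runs over m = 1,...,p skipping the vanishing factor. -/

import Mathlib

/-- Divided differences of the data `V` at the points `x`: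
`dd x V j i = V[x_i, ..., x_{i+j}]`. -/
noncomputable def dd (x V : ℤ → ℝ) : ℕ → ℤ → ℝ
  | 0, i => V i
  | j + 1, i => (dd x V j (i + 1) - dd x V j i) / (x (i + (j : ℤ) + 1) - x i)

open Polynomial Finset Lagrange

lemma card_Icc_int (i : ℤ) (n : ℕ) : (Finset.Icc i (i + n)).card = n + 1 := by
  rw [Int.card_Icc]; omega

lemma injOn_of_strictMono (x : ℤ → ℝ) (hx : StrictMono x) (s : Set ℤ) : Set.InjOn x s :=
  fun _ _ _ _ h => hx.injective h

lemma dd_coeff (x : ℤ → ℝ) (hx : StrictMono x) (V : ℤ → ℝ) (p : ℕ) (i : ℤ) :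
    (Lagrange.interpolate (Finset.Icc i (i + p)) x V).coeff p = dd x V p i := by
  induction p generalizing i with
  | zero =>
      simp only [Nat.cast_zero, add_zero, Finset.Icc_self, interpolate_singleton, dd, coeff_C]
      simp
  | succ n ih =>
      have hmem1 : i ∈ Finset.Icc i (i + (n + 1 : ℕ)) := by
        simp only [Finset.mem_Icc]; omega
      have hmem2 : i + (n : ℤ) + 1 ∈ Finset.Icc i (i + (n + 1 : ℕ)) := by
        simp only [Finset.mem_Icc]; push_cast; omega
      have hne : i ≠ i + (n : ℤ) + 1 := by omega
      rw [interpolate_eq_add_interpolate_erase (r := V)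
        (injOn_of_strictMono x hx _) hmem1 hmem2 hne]
      have he1 : (Finset.Icc i (i + (n + 1 : ℕ))).erase (i + (n : ℤ) + 1) =
          Finset.Icc i (i + (n : ℕ)) := by
        ext t
        simp only [Finset.mem_erase, Finset.mem_Icc]
        push_cast
        omega
      have he2 : (Finset.Icc i (i + (n + 1 : ℕ))).erase i =
          Finset.Icc (i + 1) ((i + 1) + (n : ℕ)) := by
        ext t
        simp only [Finset.mem_erase, Finset.mem_Icc]
        push_cast
        omega
      rw [he1, he2]
      have hd1 : (Lagrange.interpolate (Finset.Icc i (i + (n:ℕ))) x V).coeff (n+1) = 0 := by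
        apply coeff_eq_zero_of_degree_lt
        calc (Lagrange.interpolate (Finset.Icc i (i + (n:ℕ))) x V).degree
            < ((Finset.Icc i (i + (n:ℕ))).card : WithBot ℕ) :=
              degree_interpolate_lt _ (injOn_of_strictMono x hx _)
          _ ≤ ((n+1 : ℕ) : WithBot ℕ) := by rw [card_Icc_int]
      have hd2 : (Lagrange.interpolate (Finset.Icc (i+1) ((i+1) + (n:ℕ))) x V).coeff (n+1) = 0 := by
        apply coeff_eq_zero_of_degree_lt
        calc (Lagrange.interpolate (Finset.Icc (i+1) ((i+1) + (n:ℕ))) x V).degree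
            < ((Finset.Icc (i+1) ((i+1) + (n:ℕ))).card : WithBot ℕ) :=
              degree_interpolate_lt _ (injOn_of_strictMono x hx _)
          _ ≤ ((n+1 : ℕ) : WithBot ℕ) := by rw [card_Icc_int]
      have harr : ∀ (q : ℝ[X]) (a b : ℝ), q * basisDivisor a b = C (a-b)⁻¹ * (q * (X - C b)) := by
        intro q a b; rw [basisDivisor]; ring
      rw [coeff_add, harr, harr, coeff_C_mul, coeff_C_mul, coeff_mul_X_sub_C,
        coeff_mul_X_sub_C, hd1, hd2, ih, ih]
      have hne' : x (i + (n:ℤ) + 1) - x i ≠ 0 := by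
        have := hx (show i < i + (n:ℤ) + 1 by omega)
        linarith
      show _ = dd x V (n+1) i
      rw [dd]
      have h2 : x i - x (i + (n:ℤ) + 1) ≠ 0 := fun h => hne' (by linarith)
      field_simp
      ring

lemma step_lemma (p : ℕ) (x : ℤ → ℝ) (hx : StrictMono x) (V : ℤ → ℝ) (r kk : ℤ)
    (h1 : r + 1 ≤ kk) (h2 : kk ≤ r + (p : ℤ)) :
    (derivative (Lagrange.interpolate (Finset.Icc (r+1) ((r+1) + (p:ℤ))) x V)).eval (x kk)
      - (derivative (Lagrange.interpolate (Finset.Icc r (r + (p:ℤ))) x V)).eval (x kk)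
    = dd x V (p+1) r * (x (r + (p:ℤ) + 1) - x r) *
        ∏ m ∈ (Finset.Icc (1:ℤ) (p:ℤ)).filter (fun m => r + m ≠ kk), (x kk - x (r+m)) := by
  have hp : 1 ≤ p := by omega
  set T : Finset ℤ := Finset.Icc (r+1) (r + (p:ℤ)) with hT
  have hcardT : T.card = p := by rw [hT, Int.card_Icc]; omega
  set c : ℝ := dd x V (p+1) r * (x (r + (p:ℤ) + 1) - x r) with hc
  set f : ℝ[X] := Lagrange.interpolate (Finset.Icc (r+1) ((r+1) + (p:ℤ))) x V with hf
  set g : ℝ[X] := Lagrange.interpolate (Finset.Icc r (r + (p:ℤ))) x V with hg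
  have hdenne : x (r + (p:ℤ) + 1) - x r ≠ 0 := by
    have := hx (show r < r + (p:ℤ) + 1 by omega); linarith
  have hcsub : c = dd x V p (r+1) - dd x V p r := by
    rw [hc]
    have : dd x V (p+1) r = (dd x V p (r+1) - dd x V p r) / (x (r + (p:ℤ) + 1) - x r) := rfl
    rw [this, div_mul_cancel₀ _ hdenne]
  -- coefficient p of f and g
  have hcf : f.coeff p = dd x V p (r+1) := by
    rw [hf, ← dd_coeff x hx V p (r+1)]
  have hcg : g.coeff p = dd x V p r := by
    rw [hg, ← dd_coeff x hx V p r]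
  have hdf : f.degree < ((p+1 : ℕ) : WithBot ℕ) := by
    calc f.degree < ((Finset.Icc (r+1) ((r+1) + (p:ℤ))).card : WithBot ℕ) :=
          Lagrange.degree_interpolate_lt _ (injOn_of_strictMono x hx _)
      _ ≤ _ := by rw [card_Icc_int]
  have hdg : g.degree < ((p+1 : ℕ) : WithBot ℕ) := by
    calc g.degree < ((Finset.Icc r (r + (p:ℤ))).card : WithBot ℕ) :=
          Lagrange.degree_interpolate_lt _ (injOn_of_strictMono x hx _)
      _ ≤ _ := by rw [card_Icc_int]
  have hnodalDeg : (Lagrange.nodal T x).natDegree = p := by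
    rw [Lagrange.natDegree_nodal, hcardT]
  have key : f - g = C c * Lagrange.nodal T x := by
    rw [← sub_eq_zero]
    apply Polynomial.eq_zero_of_degree_lt_of_eval_index_eq_zero (v := x) T
      (injOn_of_strictMono x hx _)
    · rw [hcardT, degree_lt_iff_coeff_zero]
      intro m hm
      simp only [coeff_sub, coeff_C_mul]
      rcases eq_or_lt_of_le hm with hm | hm
      · have h1' : (Lagrange.nodal T x).coeff m = 1 := by
          rw [← hm, ← hnodalDeg]
          exact Lagrange.nodal_monic.coeff_natDegree
        rw [h1', ← hm, hcf, hcg, hcsub]; ring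
      · have hple : ((p+1:ℕ) : WithBot ℕ) ≤ ((m:ℕ) : WithBot ℕ) :=
          Nat.cast_le.mpr (Nat.succ_le_of_lt hm)
        have hf0 : f.coeff m = 0 := coeff_eq_zero_of_degree_lt (lt_of_lt_of_le hdf hple)
        have hg0 : g.coeff m = 0 := coeff_eq_zero_of_degree_lt (lt_of_lt_of_le hdg hple)
        have hn0 : (Lagrange.nodal T x).coeff m = 0 :=
          coeff_eq_zero_of_natDegree_lt (hnodalDeg ▸ hm)
        rw [hf0, hg0, hn0]; ring
    · intro j hj
      have hjT : r + 1 ≤ j ∧ j ≤ r + (p:ℤ) := Finset.mem_Icc.mp hj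
      have hj1 : j ∈ Finset.Icc (r+1) ((r+1) + (p:ℤ)) := Finset.mem_Icc.mpr ⟨by omega, by omega⟩
      have hj2 : j ∈ Finset.Icc r (r + (p:ℤ)) := Finset.mem_Icc.mpr ⟨by omega, by omega⟩
      simp only [eval_sub, eval_mul, eval_C]
      rw [hf, hg, Lagrange.eval_interpolate_at_node _ (injOn_of_strictMono x hx _) hj1,
        Lagrange.eval_interpolate_at_node _ (injOn_of_strictMono x hx _) hj2,
        Lagrange.eval_nodal_at_node hj]
      ring
  have hkkT : kk ∈ T := Finset.mem_Icc.mpr ⟨h1, h2⟩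
  have hderiv : (derivative f).eval (x kk) - (derivative g).eval (x kk)
      = c * ∏ j ∈ T.erase kk, (x kk - x j) := by
    have : derivative f - derivative g = C c * derivative (Lagrange.nodal T x) := by
      rw [← derivative_sub, key, derivative_C_mul]
    have h2' : (derivative f).eval (x kk) - (derivative g).eval (x kk)
        = ((derivative f - derivative g)).eval (x kk) := by simp
    rw [h2', this, eval_mul, eval_C, Lagrange.eval_nodal_derivative_eval_node_eq hkkT, Lagrange.eval_nodal]
  rw [hderiv]
  congr 1
  apply Finset.prod_nbij' (i := fun j => j - r) (j := fun m => r + m)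
  · intro j hj
    simp only [Finset.mem_erase, hT, Finset.mem_Icc] at hj
    simp only [Finset.mem_filter, Finset.mem_Icc]
    refine ⟨⟨by omega, by omega⟩, by omega⟩
  · intro m hm
    simp only [Finset.mem_filter, Finset.mem_Icc] at hm
    simp only [Finset.mem_erase, hT, Finset.mem_Icc]
    exact ⟨by omega, by omega, by omega⟩
  · intro j _; omega
  · intro m _; omega
  · intro j _; rw [add_sub_cancel]

lemma tele (g : ℤ → ℝ) (a : ℤ) : ∀ b, a ≤ b →
    ∑ r ∈ Finset.Icc a b, (g (r+1) - g r) = g (b+1) - g a := by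
  refine Int.le_induction ?_ ?_
  · simp
  · intro b hb ih
    rw [show Finset.Icc a (b+1) = insert (b+1) (Finset.Icc a b) by
        ext t; simp only [Finset.mem_insert, Finset.mem_Icc]; omega,
      Finset.sum_insert (by simp only [Finset.mem_Icc]; omega), ih]
    ring

/-- telescoping formula for the jump between the derivatives of the
interpolants with offsets `a` and `b+1`, evaluated at a point `x* = x_kk` common
to all the intermediate stencils. -/
theorem deriv_telescoping_jump (p : ℕ) (a b : ℤ) (hab : a ≤ b) (x : ℤ → ℝ)
    (hx : StrictMono x) (V : ℝ → ℝ) (kk : ℤ) (hk1 : b + 1 ≤ kk) (hk2 : kk ≤ a + p) :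
    (Polynomial.derivative
        (Lagrange.interpolate (Finset.Icc (b + 1) (b + 1 + p)) x fun i => V (x i))).eval (x kk) -
      (Polynomial.derivative
        (Lagrange.interpolate (Finset.Icc a (a + p)) x fun i => V (x i))).eval (x kk) =
      ∑ r ∈ Finset.Icc a b,
        dd x (fun i => V (x i)) (p + 1) r * (x (r + p + 1) - x r) *
          ∏ m ∈ (Finset.Icc (1 : ℤ) p).filter (fun m => r + m ≠ kk), (x kk - x (r + m)) := by
  have ht := tele (g := fun r => (Polynomial.derivative
      (Lagrange.interpolate (Finset.Icc r (r + (p:ℤ))) x fun i => V (x i))).eval (x kk)) a b hab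
  try simp only at ht
  rw [show (b + 1 + (p:ℤ)) = (b + 1) + (p:ℤ) from rfl]
  rw [← ht]
  apply Finset.sum_congr rfl
  intro r hr
  have hr' := Finset.mem_Icc.mp hr
  exact step_lemma p x hx (fun i => V (x i)) r kk (by omega) (by omega)
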